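/- Let G = (V,E), ≺ a total order on V, U ⊆ V, and S_U = {v ∈ U : N̄⁻(v) ∩ U = ∅}. For every feasible 0/1 solution x of the representatives formulation, the inequality Σ_{v ∈ U∖S_U} Σ_{u ∈ (N̄⁻(v)∖U) ∪ {v}} x_{uv} ≥ χ(G[U]) − |S_U| holds, where χ denotes the chromatic number. -/

import Mathlib

/-- The subgraph-induced inequality
`Σ_{v∈U∖S_U} Σ_{u∈(N̄⁻(v)∖U)∪{v}} x_{uv} ≥ χ(G[U]) − |S_U|`
is valid for every 0/1 feasible solution of the representatives formulation. -/
theorem stmt11 {V : Type*} [Fintype V] [LinearOrder V] (G : SimpleGraph V)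
    [DecidableRel G.Adj] (U : Finset V)
    (SU : Finset V) (hSU : SU = U.filter (fun v => ∀ u ∈ U, u < v → G.Adj u v))
    (x : V → V → ℚ)
    (hx01 : ∀ u v, x u v = 0 ∨ x u v = 1)
    (hdom : ∀ u v, x u v = 1 → u ≤ v ∧ (u = v ∨ ¬ G.Adj u v))
    (hcover : ∀ v, 1 ≤ x v v +
        ∑ u ∈ Finset.univ.filter (fun u => u < v ∧ ¬ G.Adj u v), x u v)
    (hedge : ∀ v u w, v < u → v < w → ¬ G.Adj v u → ¬ G.Adj v w → G.Adj u w →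
        x v u + x v w ≤ x v v)
    (hlink : ∀ v u, v < u → ¬ G.Adj v u → x v u ≤ x v v)
    (χU : ℕ) (hχ : (G.induce (U : Set V)).chromaticNumber = (χU : ℕ∞)) :
    (χU : ℚ) - SU.card ≤
      ∑ v ∈ U \ SU, (x v v +
        ∑ u ∈ (Finset.univ.filter (fun u => u < v ∧ ¬ G.Adj u v)) \ U, x u v) := by
  classical
  have hx0 : ∀ u v, 0 ≤ x u v := by
    intro u v; rcases hx01 u v with h | h <;> rw [h] <;> norm_num
  have hx1 : ∀ u v, x u v ≤ 1 := by
    intro u v; rcases hx01 u v with h | h <;> rw [h] <;> norm_num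
  -- choose a representative for each vertex, preferring itself
  have hex : ∀ v : V, ∃ u, x u v = 1 ∧ (u = v ∨ (u < v ∧ ¬ G.Adj u v)) ∧
      (x v v = 1 → u = v) := by
    intro v
    by_cases hvv : x v v = 1
    · exact ⟨v, hvv, Or.inl rfl, fun _ => rfl⟩
    · have hvv0 : x v v = 0 := (hx01 v v).resolve_right hvv
      have hc := hcover v
      rw [hvv0, zero_add] at hc
      have : ∃ u ∈ Finset.univ.filter (fun u => u < v ∧ ¬ G.Adj u v), x u v ≠ 0 := by
        by_contra h
        push_neg at h
        rw [Finset.sum_eq_zero h] at hc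
        norm_num at hc
      obtain ⟨u, hu, hune⟩ := this
      simp only [Finset.mem_filter, Finset.mem_univ, true_and] at hu
      exact ⟨u, (hx01 u v).resolve_left hune, Or.inr hu, fun h => absurd h hvv⟩
  choose r hr1 hr2 hr3 using hex
  -- r is a proper coloring
  have hproper : ∀ v w, G.Adj v w → r v ≠ r w := by
    intro v w hadj heq
    have hne : v ≠ w := G.ne_of_adj hadj
    by_cases hv : r v = v
    · have : x v w = 1 := by rw [← hv, heq]; exact hr1 w
      rcases (hdom v w this).2 with h | h
      · exact hne h
      · exact h hadj
    · by_cases hw : r w = w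
      · have : x w v = 1 := by rw [← hw, ← heq]; exact hr1 v
        rcases (hdom w v this).2 with h | h
        · exact hne h.symm
        · exact h hadj.symm
      · obtain ⟨hlt1, hna1⟩ := (hr2 v).resolve_left hv
        obtain ⟨hlt2, hna2⟩ := (hr2 w).resolve_left hw
        rw [heq] at hlt1 hna1
        have h1 := hr1 v
        have h2 := hr1 w
        rw [heq] at h1
        have := hedge (r w) v w hlt1 hlt2 hna1 hna2 hadj
        have := hx1 (r w) (r w)
        rw [h1, h2] at *
        linarith
  -- chromatic number bound
  have hcard : χU ≤ (U.image r).card := by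
    let C : (G.induce (U : Set V)).Coloring {c // c ∈ U.image r} :=
      SimpleGraph.Coloring.mk
        (fun v => ⟨r v.1, Finset.mem_image_of_mem r (by exact_mod_cast v.2)⟩)
        (by
          intro a b hab
          simp only [SimpleGraph.comap_adj, Function.Embedding.coe_subtype] at hab
          simp only [ne_eq, Subtype.mk.injEq]
          exact hproper _ _ hab)
    have := (SimpleGraph.Coloring.colorable C).chromaticNumber_le
    rw [hχ, Fintype.card_coe] at this
    exact_mod_cast this
  -- choose a witness for each color, preferring the color itself when it lies in U
  have hexw : ∀ c : V, ∃ v, c ∈ U.image r → v ∈ U ∧ r v = c ∧ (c ∈ U → v = c) := by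
    intro c
    by_cases hc : c ∈ U.image r
    · obtain ⟨v0, hv0U, hv0⟩ := Finset.mem_image.mp hc
      by_cases hcU : c ∈ U
      · -- show r c = c
        have hrc : r c = c := by
          by_cases hvc : v0 = c
          · rw [hvc] at hv0; exact hv0
          · have hne : r v0 ≠ v0 := by rw [hv0]; exact fun h => hvc h.symm
            obtain ⟨hlt, hna⟩ := (hr2 v0).resolve_left hne
            rw [hv0] at hlt hna
            have h1 : x c v0 = 1 := by rw [← hv0]; exact hr1 v0
            have h2 := hlink c v0 hlt hna
            rw [h1] at h2
            have h3 := hx1 c c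
            exact hr3 c (le_antisymm h3 h2)
        exact ⟨c, fun _ => ⟨hcU, hrc, fun _ => rfl⟩⟩
      · exact ⟨v0, fun _ => ⟨hv0U, hv0, fun h => absurd h hcU⟩⟩
    · exact ⟨c, fun h => absurd h hc⟩
  choose w hw using hexw
  set W : Finset V := (U.image r).image w with hW
  have hinj : Set.InjOn w (U.image r) := by
    intro c1 h1 c2 h2 heq
    have e1 := (hw c1 h1).2.1
    have e2 := (hw c2 h2).2.1
    rw [← e1, ← e2, heq]
  have hWcard : (U.image r).card = W.card := (Finset.card_image_of_injOn hinj).symm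
  have hWU : W ⊆ U := by
    intro v hv
    obtain ⟨c, hc, hwc⟩ := Finset.mem_image.mp hv
    exact hwc ▸ (hw c hc).1
  -- each witness outside SU contributes at least 1
  have hterm : ∀ v ∈ W \ SU, (1 : ℚ) ≤ x v v +
      ∑ u ∈ (Finset.univ.filter (fun u => u < v ∧ ¬ G.Adj u v)) \ U, x u v := by
    intro v hv
    obtain ⟨hvW, _⟩ := Finset.mem_sdiff.mp hv
    obtain ⟨c, hc, hwc⟩ := Finset.mem_image.mp hvW
    obtain ⟨hvU, hrv, hcU⟩ := hwc ▸ (hw c hc)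
    by_cases hcmem : c ∈ U
    · have hvc : v = c := hwc ▸ hcU hcmem
      have : x v v = 1 := by
        have := hr1 v; rwa [hrv, ← hvc] at this
      rw [this]
      have : 0 ≤ ∑ u ∈ (Finset.univ.filter (fun u => u < v ∧ ¬ G.Adj u v)) \ U, x u v :=
        Finset.sum_nonneg fun u _ => hx0 u v
      linarith
    · have hne : r v ≠ v := by
        rw [hrv]; intro h; exact hcmem (h ▸ hvU)
      obtain ⟨hlt, hna⟩ := (hr2 v).resolve_left hne
      have hmem : r v ∈ (Finset.univ.filter (fun u => u < v ∧ ¬ G.Adj u v)) \ U := by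
        rw [Finset.mem_sdiff, Finset.mem_filter]
        exact ⟨⟨Finset.mem_univ _, hlt, hna⟩, by rw [hrv]; exact hcmem⟩
      have hsingle : x (r v) v ≤
          ∑ u ∈ (Finset.univ.filter (fun u => u < v ∧ ¬ G.Adj u v)) \ U, x u v :=
        Finset.single_le_sum (fun u _ => hx0 u v) hmem
      have := hr1 v
      have := hx0 v v
      linarith
  -- counting
  have hcount : W.card ≤ SU.card + (W \ SU).card := by
    have h1 : (W ∩ SU).card + (W \ SU).card = W.card :=
      Finset.card_inter_add_card_sdiff W SU
    have h2 : (W ∩ SU).card ≤ SU.card := Finset.card_le_card Finset.inter_subset_right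
    omega
  have hsum : ((W \ SU).card : ℚ) ≤
      ∑ v ∈ U \ SU, (x v v +
        ∑ u ∈ (Finset.univ.filter (fun u => u < v ∧ ¬ G.Adj u v)) \ U, x u v) := by
    have hsub : W \ SU ⊆ U \ SU := fun v hv => by
      rw [Finset.mem_sdiff] at *
      exact ⟨hWU hv.1, hv.2⟩
    calc ((W \ SU).card : ℚ) = ∑ _v ∈ W \ SU, (1 : ℚ) := by simp
      _ ≤ ∑ v ∈ W \ SU, (x v v +
          ∑ u ∈ (Finset.univ.filter (fun u => u < v ∧ ¬ G.Adj u v)) \ U, x u v) :=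
        Finset.sum_le_sum hterm
      _ ≤ _ := by
        apply Finset.sum_le_sum_of_subset_of_nonneg hsub
        intro v _ _
        have h1 := hx0 v v
        have h2 : 0 ≤ ∑ u ∈ (Finset.univ.filter (fun u => u < v ∧ ¬ G.Adj u v)) \ U, x u v :=
          Finset.sum_nonneg fun u _ => hx0 u v
        linarith
  have hfin : χU ≤ SU.card + (W \ SU).card := by
    calc χU ≤ (U.image r).card := hcard
      _ = W.card := hWcard
      _ ≤ SU.card + (W \ SU).card := hcount
  have hfinQ : (χU : ℚ) ≤ (SU.card : ℚ) + ((W \ SU).card : ℚ) := by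
    exact_mod_cast hfin
  linarith
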